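/- arXiv:2002.09622 — 3 statements merged into one kernel-verified Lean document; each statement's English description precedes it below -/
import Mathlib

section
/- Let M = (S,N,V) be a neighborhood model and for each w let Σ_w ⊆ {X ⊆ S | w ∈ X}. Define N⁺(w) = N(w) ∪ Σ_w and N⁻(w) = N(w) \ Σ_w. Then for every w ∈ S and every L(W)-formula α: M,w ⊨ α iff (S,N⁺,V),w ⊨ α, and M,w ⊨ α iff (S,N⁻,V),w ⊨ α. -/
structure NModel (S : Type) where
  N : S → Set (Set S)
  V : ℕ → Set S

/-- The language L(W). -/
inductive Form : Type where
  | atom : ℕ → Form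
  | neg : Form → Form
  | and : Form → Form → Form
  | w : Form → Form

def sat {S : Type} (M : NModel S) : S → Form → Prop
  | s, .atom p => s ∈ M.V p
  | s, .neg φ => ¬ sat M s φ
  | s, .and φ ψ => sat M s φ ∧ sat M s ψ
  | s, .w φ => {x | sat M x φ} ∈ M.N s ∧ ¬ sat M s φ

/-- Adding or removing neighborhoods containing the evaluation point does not affect
truth of L(W)-formulas. -/
theorem w_invariance_add_remove {S : Type} (N : S → Set (Set S)) (V : ℕ → Set S)
    (Sig : S → Set (Set S)) (hSig : ∀ w, ∀ X ∈ Sig w, w ∈ X) :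
    ∀ (w : S) (α : Form),
      (sat ⟨N, V⟩ w α ↔ sat ⟨fun x => N x ∪ Sig x, V⟩ w α) ∧
      (sat ⟨N, V⟩ w α ↔ sat ⟨fun x => N x \ Sig x, V⟩ w α) := by
  intro w α
  induction α generalizing w with
  | atom p => exact ⟨Iff.rfl, Iff.rfl⟩
  | neg φ ih => exact ⟨not_congr (ih w).1, not_congr (ih w).2⟩
  | and φ ψ ih1 ih2 =>
      exact ⟨and_congr (ih1 w).1 (ih2 w).1, and_congr (ih1 w).2 (ih2 w).2⟩
  | w φ ih =>
      have h1 : {x | sat ⟨fun x => N x ∪ Sig x, V⟩ x φ} = {x | sat ⟨N, V⟩ x φ} := by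
        ext x; exact (ih x).1.symm
      have h2 : {x | sat ⟨fun x => N x \ Sig x, V⟩ x φ} = {x | sat ⟨N, V⟩ x φ} := by
        ext x; exact (ih x).2.symm
      constructor
      · show _ ↔ _ ∈ N w ∪ Sig w ∧ _
        rw [h1, show (¬ sat ⟨fun x => N x ∪ Sig x, V⟩ w φ) ↔ ¬ sat ⟨N, V⟩ w φ from
          not_congr (ih w).1.symm]
        constructor
        · rintro ⟨hN, hns⟩; exact ⟨Or.inl hN, hns⟩
        · rintro ⟨hN, hns⟩
          cases hN with
          | inl h => exact ⟨h, hns⟩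
          | inr h => exact absurd (hSig w _ h) hns
      · show _ ↔ _ ∈ N w \ Sig w ∧ _
        rw [h2, show (¬ sat ⟨fun x => N x \ Sig x, V⟩ w φ) ↔ ¬ sat ⟨N, V⟩ w φ from
          not_congr (ih w).2.symm]
        constructor
        · rintro ⟨hN, hns⟩
          exact ⟨⟨hN, fun h => hns (hSig w _ h)⟩, hns⟩
        · rintro ⟨hN, hns⟩; exact ⟨hN.1, hns⟩
end

section
/- The frame property of closure under binary intersections (c) is not definable in L(W): there exist frames F and F' with F satisfying (c), F' not, such that F and F' validate exactly the same L(W)-formulas. -/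
def frameValid {S : Type} (N : S → Set (Set S)) (φ : Form) : Prop :=
  ∀ (V : ℕ → Set S) (s : S), sat ⟨N, V⟩ s φ

/-- Closure under binary intersections. -/
def closedInterFrame {S : Type} (N : S → Set (Set S)) : Prop :=
  ∀ s (X Y : Set S), X ∈ N s → Y ∈ N s → X ∩ Y ∈ N s

/-- If every neighborhood of `s` contains `s`, then `W φ` is never satisfied,
so satisfaction does not depend on `N` at all. -/
lemma sat_indep {S : Type} (N N' : S → Set (Set S))
    (hN : ∀ s X, X ∈ N s → s ∈ X) (hN' : ∀ s X, X ∈ N' s → s ∈ X)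
    (V : ℕ → Set S) : ∀ (φ : Form) (s : S),
    sat ⟨N, V⟩ s φ ↔ sat ⟨N', V⟩ s φ := by
  intro φ
  induction φ with
  | atom p => intro s; rfl
  | neg φ ih => intro s; simp only [sat, ih]
  | and φ ψ ih1 ih2 => intro s; simp only [sat, ih1, ih2]
  | w φ ih =>
    intro s
    constructor
    · rintro ⟨h1, h2⟩
      exact absurd (hN s _ h1) h2
    · rintro ⟨h1, h2⟩
      exact absurd (hN' s _ h1) h2

/-- Property (c) is not definable in L(W): there are frames F (with (c)) and F'
(without (c)) validating exactly the same L(W)-formulas. -/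
theorem c_undefinable_in_w :
    ∃ (S S' : Type) (_ : Nonempty S) (_ : Nonempty S')
      (N : S → Set (Set S)) (N' : S' → Set (Set S')),
      closedInterFrame N ∧ ¬ closedInterFrame N' ∧
      (∀ φ : Form, frameValid N φ ↔ frameValid N' φ) := by
  refine ⟨Fin 3, Fin 3, ⟨0⟩, ⟨0⟩, fun _ => ∅,
    fun s => {X | s ∈ X ∧ X ≠ {s}}, ?_, ?_, ?_⟩
  · intro s X Y hX _; exact absurd hX (Set.notMem_empty _)
  · intro h
    have := h 0 {0, 1} {0, 2} ⟨by simp, ?_⟩ ⟨by simp, ?_⟩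
    · rcases this with ⟨_, hne⟩
      apply hne
      ext x
      fin_cases x <;> simp
    · intro he
      have : (1 : Fin 3) ∈ ({0} : Set (Fin 3)) := he ▸ (by simp : (1 : Fin 3) ∈ ({0, 1} : Set (Fin 3)))
      simp at this
    · intro he
      have : (2 : Fin 3) ∈ ({0} : Set (Fin 3)) := he ▸ (by simp : (2 : Fin 3) ∈ ({0, 2} : Set (Fin 3)))
      simp at this
  · intro φ
    constructor
    · intro h V s
      exact (sat_indep _ _ (fun s X hX => absurd hX (Set.notMem_empty _))
        (fun s X hX => hX.1) V φ s).mp (h V s)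
    · intro h V s
      exact (sat_indep _ _ (fun s X hX => hX.1)
        (fun s X hX => absurd hX (Set.notMem_empty _)) V φ s).mp (h V s)
end

section
/- Let M be a neighborhood model and M^tc its transitive closure. Then for all states w and all L(W)-formulas φ: M,w ⊨ φ iff M^tc,w ⊨ φ. -/
/-- `m_{N}(X) = {z | X ∈ N(z)}`. -/
def mN {S : Type} (N : S → Set (Set S)) (X : Set S) : Set S := {z | X ∈ N z}

/-- The iterated neighborhood functions `N_i`. -/
def Niter {S : Type} (N : S → Set (Set S)) : ℕ → S → Set (Set S)
  | 0 => N
  | i + 1 => fun w => Niter N i w ∪ (fun X => mN (Niter N i) X) '' Niter N i w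

/-- The transitive closure `N^tc = ⋃_i N_i`. -/
def Ntc {S : Type} (N : S → Set (Set S)) (w : S) : Set (Set S) := ⋃ i, Niter N i w

lemma key {S : Type} (N : S → Set (Set S)) (i : ℕ) (w : S) (X : Set S)
    (h : X ∈ Niter N i w) (hn : X ∉ N w) : w ∈ X := by
  induction i with
  | zero => exact absurd h hn
  | succ i ih =>
    rcases h with h | ⟨Y, hY, rfl⟩
    · exact ih h
    · exact hY

/-- L(W)-formulas are invariant under transitive closure of neighborhood models. -/
theorem w_invariant_transitive_closure {S : Type} (N : S → Set (Set S)) (V : ℕ → Set S) :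
    ∀ (w : S) (φ : Form), sat ⟨N, V⟩ w φ ↔ sat ⟨Ntc N, V⟩ w φ := by
  intro w φ
  induction φ generalizing w with
  | atom p => simp [sat]
  | neg φ ih => simp [sat, ih]
  | and φ ψ ih1 ih2 => simp [sat, ih1, ih2]
  | w φ ih =>
    have hset : {x | sat ⟨N, V⟩ x φ} = {x | sat (⟨Ntc N, V⟩ : NModel S) x φ} := by
      ext x; exact ih x
    simp only [sat, ← hset, ih w]
    constructor
    · rintro ⟨h1, h2⟩
      exact ⟨Set.mem_iUnion.2 ⟨0, h1⟩, h2⟩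
    · rintro ⟨h1, h2⟩
      rcases Set.mem_iUnion.1 h1 with ⟨i, hi⟩
      refine ⟨?_, h2⟩
      by_contra hn
      exact h2 ((ih w).1 (key N i w _ hi hn))
end
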